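/- Let π₁: (X₁,T₁) → (Y₁,S₁) and π₂: (X₂,T₂) → (Y₂,S₂) be proximal factor maps between compact metric dynamical systems. Then the product map π₁ × π₂: (X₁×X₂, T₁×T₂) → (Y₁×Y₂, S₁×S₂) is proximal. -/

import Mathlib

open Set Function Filter Topology

set_option linter.unusedSectionVars false
set_option linter.unusedVariables false

/-- A proximal pair: the liminf of the distances of iterates is zero. -/
def ProximalPair {X : Type*} [MetricSpace X] (T : X → X) (x x' : X) : Prop :=
  Filter.liminf (fun n : ℕ => dist (T^[n] x) (T^[n] x')) Filter.atTop = 0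

def orbitCl {Z : Type*} [MetricSpace Z] (R : Z → Z) (z : Z) : Set Z :=
  closure (Set.range fun n => R^[n] z)

def IsMinPt {Z : Type*} [MetricSpace Z] (R : Z → Z) (z : Z) : Prop :=
  ∀ w ∈ orbitCl R z, z ∈ orbitCl R w

section Aux

variable {Z : Type*} [MetricSpace Z] [CompactSpace Z] {R : Z → Z}

lemma mem_orbitCl_self (R : Z → Z) (z : Z) : z ∈ orbitCl R z :=
  subset_closure ⟨0, rfl⟩

lemma orbitCl_iterate_invariant (hR : Continuous R) (z : Z) (n : ℕ) :
    R^[n] '' orbitCl R z ⊆ orbitCl R z := by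
  refine (image_closure_subset_closure_image (hR.iterate n)).trans (closure_mono ?_)
  rintro _ ⟨_, ⟨m, rfl⟩, rfl⟩
  exact ⟨n + m, by simp [Function.iterate_add_apply]⟩

lemma orbitCl_invariant (hR : Continuous R) (z : Z) : R '' orbitCl R z ⊆ orbitCl R z := by
  simpa using orbitCl_iterate_invariant hR z 1

lemma exists_minPt (hR : Continuous R) (z : Z) : ∃ m ∈ orbitCl R z, IsMinPt R m := by
  set S : Set (Set Z) :=
    {A | A.Nonempty ∧ IsClosed A ∧ R '' A ⊆ A} with hS
  have horb : ∀ {A : Set Z}, A ∈ S → ∀ a ∈ A, orbitCl R a ⊆ A := by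
    rintro A ⟨-, hAc, hAi⟩ a ha
    refine closure_minimal ?_ hAc
    rintro _ ⟨n, rfl⟩
    induction n with
    | zero => exact ha
    | succ n ih =>
        have : R^[n + 1] a = R (R^[n] a) := Function.iterate_succ_apply' R n a
        simpa [this] using hAi ⟨_, ih, rfl⟩
  have hchaincond : ∀ c ⊆ S, IsChain (· ⊆ ·) c → c.Nonempty →
      ∃ lb ∈ S, ∀ s ∈ c, lb ⊆ s := by
    intro c hcS hchain hcne
    haveI : Nonempty c := hcne.to_subtype
    refine ⟨⋂₀ c, ⟨?_, ?_, ?_⟩, fun s hs => sInter_subset_of_mem hs⟩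
    · refine IsCompact.nonempty_sInter_of_directed_nonempty_isCompact_isClosed ?_
        (fun U hU => (hcS hU).1) (fun U hU => ((hcS hU).2.1).isCompact)
        (fun U hU => (hcS hU).2.1)
      intro A hA B hB
      rcases hchain.total hA hB with h | h
      · exact ⟨A, hA, Subset.rfl, h⟩
      · exact ⟨B, hB, h, Subset.rfl⟩
    · exact isClosed_sInter fun U hU => (hcS hU).2.1
    · rintro _ ⟨a, ha, rfl⟩ A hA
      exact (hcS hA).2.2 ⟨a, ha A hA, rfl⟩
  obtain ⟨M, hMsub, hMmin⟩ := zorn_superset_nonempty S hchaincond (orbitCl R z)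
    ⟨⟨z, mem_orbitCl_self R z⟩, isClosed_closure, orbitCl_invariant hR z⟩
  have hMmem : M ∈ S := hMmin.1
  have hMmin' : ∀ A ∈ S, A ⊆ M → M ⊆ A := fun A hA hAM => hMmin.2 hA hAM
  obtain ⟨m, hm⟩ := hMmem.1
  have hkey : ∀ a ∈ M, orbitCl R a = M := by
    intro a ha
    have h1 : orbitCl R a ⊆ M := horb hMmem a ha
    have h2 : orbitCl R a ∈ S :=
      ⟨⟨a, mem_orbitCl_self R a⟩, isClosed_closure, orbitCl_invariant hR a⟩
    exact le_antisymm h1 (hMmin' _ h2 h1)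
  refine ⟨m, hMsub hm, fun w hw => ?_⟩
  rw [hkey m hm] at hw
  rw [hkey w hw]
  exact hm

end Aux

section Factor
variable {Z W : Type*} [MetricSpace Z] [CompactSpace Z] [MetricSpace W] [CompactSpace W]
  {R : Z → Z} {R' : W → W} {φ : Z → W}

lemma orbitCl_image (hφ : Continuous φ) (hc : ∀ z, φ (R z) = R' (φ z)) (z : Z) :
    orbitCl R' (φ z) = φ '' orbitCl R z := by
  have hit : ∀ (n : ℕ) (w : Z), φ (R^[n] w) = R'^[n] (φ w) := by
    intro n
    induction n with
    | zero => intro w; rfl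
    | succ n ih =>
        intro w
        rw [Function.iterate_succ_apply', Function.iterate_succ_apply', hc, ih]
  have himg : φ '' (Set.range fun n => R^[n] z) = Set.range fun n => R'^[n] (φ z) := by
    ext w
    constructor
    · rintro ⟨_, ⟨n, rfl⟩, rfl⟩; exact ⟨n, (hit n z).symm⟩
    · rintro ⟨n, rfl⟩; exact ⟨R^[n] z, ⟨n, rfl⟩, hit n z⟩
  apply le_antisymm
  · have hcl : IsClosed (φ '' orbitCl R z) :=
      (isClosed_closure.isCompact.image hφ).isClosed
    refine closure_minimal ?_ hcl
    rw [← himg]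
    exact image_mono subset_closure
  · refine (image_closure_subset_closure_image hφ).trans ?_
    rw [himg]; exact Subset.rfl

lemma IsMinPt.factor (hφ : Continuous φ) (hc : ∀ z, φ (R z) = R' (φ z)) {m : Z}
    (hm : IsMinPt R m) : IsMinPt R' (φ m) := by
  intro w hw
  rw [orbitCl_image hφ hc] at hw
  obtain ⟨v, hv, rfl⟩ := hw
  rw [orbitCl_image hφ hc]
  exact ⟨m, hm v hv, rfl⟩

end Factor

section Prox
variable {X : Type*} [MetricSpace X] [CompactSpace X] {T : X → X}

lemma iterate_pair (T : X → X) (a : X × X) (n : ℕ) :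
    (Prod.map T T)^[n] a = (T^[n] a.1, T^[n] a.2) := by
  rw [Prod.map_iterate]; rfl

lemma dist_bddUnder (x x' : X) :
    Filter.IsBoundedUnder (· ≤ ·) Filter.atTop
      (fun n : ℕ => dist (T^[n] x) (T^[n] x')) := by
  obtain ⟨C, hC⟩ := (isCompact_univ (X := X)).isBounded.subset_closedBall x
  refine Filter.isBoundedUnder_of ⟨2 * C, fun n => ?_⟩
  have h1 : dist (T^[n] x) x ≤ C := by
    simpa [Metric.mem_closedBall] using hC (mem_univ (T^[n] x))
  have h2 : dist (T^[n] x') x ≤ C := by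
    simpa [Metric.mem_closedBall] using hC (mem_univ (T^[n] x'))
  calc dist (T^[n] x) (T^[n] x') ≤ dist (T^[n] x) x + dist x (T^[n] x') :=
        dist_triangle _ _ _
    _ ≤ C + C := by rw [dist_comm x]; exact add_le_add h1 h2
    _ = 2 * C := by ring

lemma dist_bddUnder_ge (x x' : X) :
    Filter.IsBoundedUnder (· ≥ ·) Filter.atTop
      (fun n : ℕ => dist (T^[n] x) (T^[n] x')) :=
  Filter.isBoundedUnder_of ⟨0, fun n => dist_nonneg⟩

lemma proximal_frequently {x x' : X} (h : ProximalPair T x x') {ε : ℝ} (hε : 0 < ε) :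
    ∃ᶠ n in Filter.atTop, dist (T^[n] x) (T^[n] x') < ε := by
  have hb : Filter.IsCoboundedUnder (· ≥ ·) Filter.atTop
      (fun n : ℕ => dist (T^[n] x) (T^[n] x')) :=
    (dist_bddUnder x x').isCoboundedUnder_ge
  exact Filter.frequently_lt_of_liminf_lt hb (by rw [h]; exact hε)

lemma minPt_proximal_eq (hT : Continuous T) {x x' : X}
    (hmin : IsMinPt (Prod.map T T) (x, x')) (hp : ProximalPair T x x') : x = x' := by
  have hsel : ∀ k : ℕ, ∃ n : ℕ, dist (T^[n] x) (T^[n] x') < 1 / (k + 1) := fun k =>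
    (proximal_frequently hp (by positivity)).exists
  choose ν hν using hsel
  set g : ℕ → X × X := fun k => (T^[ν k] x, T^[ν k] x') with hg
  obtain ⟨a, -, ψ, hψ, ha⟩ := (isCompact_univ (X := X × X)).tendsto_subseq
    (x := g) (fun n => mem_univ _)
  have hd : Tendsto (fun k => dist ((g ∘ ψ) k).1 ((g ∘ ψ) k).2) atTop (𝓝 (dist a.1 a.2)) :=
    ((continuous_fst.dist continuous_snd).tendsto a).comp ha
  have hz : Tendsto (fun k => dist ((g ∘ ψ) k).1 ((g ∘ ψ) k).2) atTop (𝓝 0) := by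
    have hup : ∀ k, dist ((g ∘ ψ) k).1 ((g ∘ ψ) k).2 ≤ 1 / (ψ k + 1) :=
      fun k => le_of_lt (hν (ψ k))
    have htend : Tendsto (fun k : ℕ => 1 / ((ψ k : ℝ) + 1)) atTop (𝓝 0) :=
      tendsto_one_div_add_atTop_nhds_zero_nat.comp hψ.tendsto_atTop
    exact squeeze_zero (fun k => dist_nonneg) hup htend
  have haeq : a.1 = a.2 := dist_eq_zero.mp (tendsto_nhds_unique hd hz)
  have hamem : a ∈ orbitCl (Prod.map T T) (x, x') := by
    refine isClosed_closure.mem_of_tendsto ha (Filter.Eventually.of_forall fun k => ?_)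
    refine subset_closure ⟨ν (ψ k), ?_⟩
    show (Prod.map T T)^[ν (ψ k)] (x, x') = g (ψ k)
    rw [iterate_pair]
  have hxa := hmin a hamem
  have hdiag : orbitCl (Prod.map T T) a ⊆ {p : X × X | p.1 = p.2} := by
    refine closure_minimal ?_ (isClosed_eq continuous_fst continuous_snd)
    rintro _ ⟨n, rfl⟩
    show ((Prod.map T T)^[n] a).1 = ((Prod.map T T)^[n] a).2
    rw [iterate_pair, haeq]
  exact hdiag hxa

lemma proximal_of_diag_mem (hT : Continuous T) {x x' : X} {q : X}
    (hq : (q, q) ∈ orbitCl (Prod.map T T) (x, x')) : ProximalPair T x x' := by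
  set u : ℕ → ℝ := fun n => dist (T^[n] x) (T^[n] x') with hu
  have hfreq : ∀ ε > (0:ℝ), ∃ᶠ n in Filter.atTop, u n ≤ ε := by
    intro ε hε
    rw [Filter.frequently_atTop]
    intro N
    have hset : (Prod.map T T)^[N] '' (Set.range fun n => (Prod.map T T)^[n] (x, x'))
        = Set.range fun n => (Prod.map T T)^[n + N] (x, x') := by
      ext w
      constructor
      · rintro ⟨_, ⟨n, rfl⟩, rfl⟩
        exact ⟨n, by simp [← Function.iterate_add_apply, Nat.add_comm]⟩
      · rintro ⟨n, rfl⟩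
        exact ⟨(Prod.map T T)^[n] (x, x'), ⟨n, rfl⟩,
          by simp [← Function.iterate_add_apply, Nat.add_comm]⟩
    have hmem : (Prod.map T T)^[N] (q, q) ∈
        closure (Set.range fun n => (Prod.map T T)^[n + N] (x, x')) := by
      have h1 := image_closure_subset_closure_image
        (s := Set.range fun n => (Prod.map T T)^[n] (x, x'))
        ((hT.prodMap hT).iterate N)
      have h2 := h1 ⟨_, hq, rfl⟩
      rwa [hset] at h2
    rw [Metric.mem_closure_iff] at hmem
    obtain ⟨_, ⟨n, rfl⟩, hlt⟩ := hmem (ε / 2) (by linarith)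
    refine ⟨n + N, Nat.le_add_left N n, ?_⟩
    simp only [iterate_pair, Prod.dist_eq, max_lt_iff] at hlt
    obtain ⟨h1, h2⟩ := hlt
    have htri : u (n + N) ≤ dist (T^[n+N] x) (T^[N] q) + dist (T^[N] q) (T^[n+N] x') :=
      dist_triangle _ _ _
    rw [dist_comm (T^[N] q) (T^[n+N] x)] at h1
    linarith
  refine le_antisymm ?_ ?_
  · refine le_of_forall_pos_le_add fun ε hε => ?_
    have := Filter.liminf_le_of_frequently_le (hfreq ε hε) (dist_bddUnder_ge x x')
    simpa using this
  · exact Filter.le_liminf_of_le ((dist_bddUnder x x').isCoboundedUnder_ge)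
      (Filter.Eventually.of_forall fun n => dist_nonneg)

end Prox

/-- The product of two proximal factor maps is proximal. -/
theorem prod_proximal {X₁ Y₁ X₂ Y₂ : Type*}
    [MetricSpace X₁] [CompactSpace X₁] [MetricSpace Y₁] [CompactSpace Y₁]
    [MetricSpace X₂] [CompactSpace X₂] [MetricSpace Y₂] [CompactSpace Y₂]
    {T₁ : X₁ → X₁} {S₁ : Y₁ → Y₁} {π₁ : X₁ → Y₁}
    {T₂ : X₂ → X₂} {S₂ : Y₂ → Y₂} {π₂ : X₂ → Y₂}
    (hT₁ : Continuous T₁) (hT₁s : Surjective T₁)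
    (hS₁ : Continuous S₁) (hS₁s : Surjective S₁)
    (hπ₁ : Continuous π₁) (hπ₁s : Surjective π₁) (hcomm₁ : π₁ ∘ T₁ = S₁ ∘ π₁)
    (hT₂ : Continuous T₂) (hT₂s : Surjective T₂)
    (hS₂ : Continuous S₂) (hS₂s : Surjective S₂)
    (hπ₂ : Continuous π₂) (hπ₂s : Surjective π₂) (hcomm₂ : π₂ ∘ T₂ = S₂ ∘ π₂)
    (hprox₁ : ∀ x x' : X₁, π₁ x = π₁ x' → ProximalPair T₁ x x')
    (hprox₂ : ∀ x x' : X₂, π₂ x = π₂ x' → ProximalPair T₂ x x') :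
    ∀ p p' : X₁ × X₂, Prod.map π₁ π₂ p = Prod.map π₁ π₂ p' →
      ProximalPair (Prod.map T₁ T₂) p p' := by
  intro p p' hpp
  obtain ⟨x₁, x₂⟩ := p
  obtain ⟨x₁', x₂'⟩ := p'
  have h1 : π₁ x₁ = π₁ x₁' := congrArg Prod.fst hpp
  have h2 : π₂ x₂ = π₂ x₂' := congrArg Prod.snd hpp
  set T : X₁ × X₂ → X₁ × X₂ := Prod.map T₁ T₂ with hTdef
  have hTc : Continuous T := hT₁.prodMap hT₂
  obtain ⟨q, hq, hqmin⟩ := exists_minPt (hTc.prodMap hTc) ((x₁, x₂), (x₁', x₂'))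
  -- semiconjugacies iterated
  have hsc₁ : ∀ (n : ℕ) (a : X₁), π₁ (T₁^[n] a) = S₁^[n] (π₁ a) := by
    intro n a
    have : Function.Semiconj π₁ T₁ S₁ := fun b => congrFun hcomm₁ b
    exact (this.iterate_right n) a
  have hsc₂ : ∀ (n : ℕ) (a : X₂), π₂ (T₂^[n] a) = S₂^[n] (π₂ a) := by
    intro n a
    have : Function.Semiconj π₂ T₂ S₂ := fun b => congrFun hcomm₂ b
    exact (this.iterate_right n) a
  -- the orbit closure lies in the π-fiber relation
  have hiter : ∀ n : ℕ, (Prod.map T T)^[n] ((x₁, x₂), (x₁', x₂'))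
      = ((T₁^[n] x₁, T₂^[n] x₂), (T₁^[n] x₁', T₂^[n] x₂')) := by
    intro n
    simp [Prod.map_iterate, hTdef]
  have hq1 : π₁ q.1.1 = π₁ q.2.1 := by
    have hsub : orbitCl (Prod.map T T) ((x₁, x₂), (x₁', x₂')) ⊆
        {z : (X₁ × X₂) × (X₁ × X₂) | π₁ z.1.1 = π₁ z.2.1} := by
      refine closure_minimal ?_ (isClosed_eq
        (hπ₁.comp (continuous_fst.comp continuous_fst))
        (hπ₁.comp (continuous_fst.comp continuous_snd)))
      rintro _ ⟨n, rfl⟩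
      show π₁ ((Prod.map T T)^[n] ((x₁, x₂), (x₁', x₂'))).1.1
        = π₁ ((Prod.map T T)^[n] ((x₁, x₂), (x₁', x₂'))).2.1
      rw [hiter n]
      simp only
      rw [hsc₁, hsc₁, h1]
    exact hsub hq
  have hq2 : π₂ q.1.2 = π₂ q.2.2 := by
    have hsub : orbitCl (Prod.map T T) ((x₁, x₂), (x₁', x₂')) ⊆
        {z : (X₁ × X₂) × (X₁ × X₂) | π₂ z.1.2 = π₂ z.2.2} := by
      refine closure_minimal ?_ (isClosed_eq
        (hπ₂.comp (continuous_snd.comp continuous_fst))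
        (hπ₂.comp (continuous_snd.comp continuous_snd)))
      rintro _ ⟨n, rfl⟩
      show π₂ ((Prod.map T T)^[n] ((x₁, x₂), (x₁', x₂'))).1.2
        = π₂ ((Prod.map T T)^[n] ((x₁, x₂), (x₁', x₂'))).2.2
      rw [hiter n]
      simp only
      rw [hsc₂, hsc₂, h2]
    exact hsub hq
  -- factor minimality to each coordinate pair
  have hmin1 : IsMinPt (Prod.map T₁ T₁) (q.1.1, q.2.1) := by
    have := hqmin.factor (φ := fun z : (X₁ × X₂) × (X₁ × X₂) => (z.1.1, z.2.1))
      (R' := Prod.map T₁ T₁)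
      ((continuous_fst.comp continuous_fst).prodMk (continuous_fst.comp continuous_snd))
      (fun z => rfl)
    exact this
  have hmin2 : IsMinPt (Prod.map T₂ T₂) (q.1.2, q.2.2) := by
    have := hqmin.factor (φ := fun z : (X₁ × X₂) × (X₁ × X₂) => (z.1.2, z.2.2))
      (R' := Prod.map T₂ T₂)
      ((continuous_snd.comp continuous_fst).prodMk (continuous_snd.comp continuous_snd))
      (fun z => rfl)
    exact this
  have he1 : q.1.1 = q.2.1 := minPt_proximal_eq hT₁ hmin1 (hprox₁ _ _ hq1)
  have he2 : q.1.2 = q.2.2 := minPt_proximal_eq hT₂ hmin2 (hprox₂ _ _ hq2)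
  have hqeq : q = (q.1, q.1) := by
    have h : q.2 = q.1 := Prod.ext he1.symm he2.symm
    exact Prod.ext rfl h
  refine proximal_of_diag_mem hTc (q := q.1) ?_
  rw [← hqeq]
  exact hq
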